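/- Let σ be a permutation of size n and A the binary search tree of σ built by the recursive insertion-by-first-value algorithm. Then (i) applying the root-selection algorithm on weighted Dyck paths to ψ_FV(σ) yields the tree A; and (ii) if (D,w) = ψ_FV^0(σ), applying the same root-selection algorithm to the weighted path obtained from (D,w) by removing the first step of D and appending a down-step at its end also yields the tree A. -/

import Mathlib

open scoped Classical
noncomputable section

/-- Value of `σ` at the 1-indexed position `j`, with the convention that positions
outside `[1,n]` (in particular positions `0` and `n+1`) carry the value `0`. -/
def pval (n : ℕ) (σ : Equiv.Perm (Fin n)) (j : ℕ) : ℕ :=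
  if h : 1 ≤ j ∧ j ≤ n then ((σ ⟨j - 1, by omega⟩ : Fin n) : ℕ) + 1 else 0
/-- Value of `σ` at the 1-indexed position `j`, with the conventions `σ_0 = 0` and
`σ_{n+1} = n+1`. -/
def pval1 (n : ℕ) (σ : Equiv.Perm (Fin n)) (j : ℕ) : ℕ :=
  if j = 0 then 0 else if j ≤ n then pval n σ j else n + 1
/-- The (1-indexed) position of a value `v ∈ [1,n]` in `σ`. -/
def ppos (n : ℕ) (σ : Equiv.Perm (Fin n)) (v : ℕ) : ℕ :=
  if h : 1 ≤ v ∧ v ≤ n then ((σ.symm ⟨v - 1, by omega⟩ : Fin n) : ℕ) + 1 else 0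
/-- Number of 31-2 patterns of `σ` in which the value `k` plays the role of the `2`. -/
def totk (n : ℕ) (σ : Equiv.Perm (Fin n)) (k : ℕ) : ℕ :=
  ((Finset.Icc 1 n ×ˢ Finset.Icc 1 n).filter (fun p =>
    p.1 + 1 < p.2 ∧ pval n σ (p.1 + 1) < pval n σ p.2 ∧ pval n σ p.2 < pval n σ p.1 ∧
      pval n σ p.2 = k)).card
/-- The Dyck path of the Françon–Viennot map (conventions `σ_0 = 0`, `σ_{n+1} = n+1`):
for `k = σ_j`, step `2k-1` is up iff `σ_j < σ_{j+1}` and step `2k` is up iff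
`¬ (σ_{j-1} < σ_j)`. -/
def fvPath (n : ℕ) (σ : Equiv.Perm (Fin n)) : ℕ → Bool := fun m =>
  if 1 ≤ m ∧ m ≤ 2 * n then
    if m % 2 = 1 then
      if pval1 n σ (ppos n σ ((m + 1) / 2)) < pval1 n σ (ppos n σ ((m + 1) / 2) + 1)
        then true else false
    else
      if pval1 n σ (ppos n σ (m / 2) - 1) < pval1 n σ (ppos n σ (m / 2))
        then false else true
  else false
/-- The weight of the Françon–Viennot map: `w k = tot_k σ`. -/
def fvWeight (n : ℕ) (σ : Equiv.Perm (Fin n)) : ℕ → ℕ := fun k =>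
  if 1 ≤ k ∧ k ≤ n then totk n σ k else 0
/-- The Dyck path of the type-0 Françon–Viennot map (conventions `σ_0 = σ_{n+1} = 0`):
the Françon–Viennot rules applied to the values `1, …, n-1`, an up-step prepended and a
down-step appended. -/
def fv0Path (n : ℕ) (σ : Equiv.Perm (Fin n)) : ℕ → Bool := fun m =>
  if m = 0 ∨ 2 * n < m then false
  else if m = 1 then true
  else if m = 2 * n then false
  else
    if (m - 1) % 2 = 1 then
      if pval n σ (ppos n σ (m / 2)) < pval n σ (ppos n σ (m / 2) + 1)
        then true else false
    else
      if pval n σ (ppos n σ ((m - 1) / 2) - 1) < pval n σ (ppos n σ ((m - 1) / 2))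
        then false else true
/-- The weight of the type-0 Françon–Viennot map: `w k = tot_k σ` for `k ≤ n-1`,
and a `0` appended at position `n`. -/
def fv0Weight (n : ℕ) (σ : Equiv.Perm (Fin n)) : ℕ → ℕ := fun k =>
  if 1 ≤ k ∧ k + 1 ≤ n then totk n σ k else 0

/-! ### The involution ψ on (weighted) Dyck paths -/
/-- Labeled binary trees. -/
inductive BT : Type
  | nil : BT
  | node : ℕ → BT → BT → BT
/-- The root label of a binary tree, if any. -/
def BT.root? : BT → Option ℕ
  | .nil => none
  | .node v _ _ => some v
/-- The set of labels of a binary tree. -/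
def BT.labels : BT → Finset ℕ
  | .nil => ∅
  | .node v l r => insert v (l.labels ∪ r.labels)
/-- The binary-search-tree property. -/
def BT.IsBST : BT → Prop
  | .nil => True
  | .node v l r =>
      (∀ y ∈ l.labels, y < v) ∧ (∀ y ∈ r.labels, v < y) ∧ l.IsBST ∧ r.IsBST
/-- Restriction of a binary search tree to the interval of values `[a, b]`. -/
def BT.restrict (a b : ℕ) : BT → BT
  | .nil => .nil
  | .node v l r =>
      if v < a then r.restrict a b
      else if b < v then l.restrict a b
      else .node v (l.restrict a b) (r.restrict a b)
/-- Build a binary tree on the interval `[a,b]` using `choose` to select roots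
(with enough fuel). -/
def buildTreeFuel (choose : ℕ → ℕ → ℕ) : ℕ → ℕ → ℕ → BT
  | 0, _, _ => .nil
  | fuel + 1, a, b =>
    if a ≤ b then
      BT.node (choose a b) (buildTreeFuel choose fuel a (choose a b - 1))
        (buildTreeFuel choose fuel (choose a b + 1) b)
    else .nil
/-- Build a binary tree on the interval `[a,b]` using `choose` to select roots. -/
def buildTree (choose : ℕ → ℕ → ℕ) (a b : ℕ) : BT :=
  buildTreeFuel choose (b + 1 - a) a b
/-- Root selection for the binary search tree of a permutation: the value of
`[a,b] ∩ [1,n]` appearing first in `σ`. -/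
def chooseP (n : ℕ) (σ : Equiv.Perm (Fin n)) (a b : ℕ) : ℕ :=
  pval n σ ((((Finset.Icc (max a 1) (min b n)).image (ppos n σ)).min).getD 0)
/-- The binary search tree of a permutation (recursive first-value algorithm). -/
def bstOfPerm (n : ℕ) (σ : Equiv.Perm (Fin n)) : BT :=
  buildTree (chooseP n σ) 1 n
/-- Root selection on a weighted path: among the positions of `[a,b] ∩ [1,n]` of
minimal weight, the smallest one whose step `2i` is a down-step, and if there is none,
the largest one. -/
def chooseD (n : ℕ) (D : ℕ → Bool) (w : ℕ → ℕ) (a b : ℕ) : ℕ :=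
  let I := Finset.Icc (max a 1) (min b n)
  let M := I.filter (fun i => w i = ((I.image w).min).getD 0)
  (((M.filter (fun i => D (2 * i) = false)).min).getD (M.max.getD 0))
/-- The binary search tree of a weighted path (root-selection algorithm). -/
def bstOfPath (n : ℕ) (D : ℕ → Bool) (w : ℕ → ℕ) : BT :=
  buildTree (chooseD n D w) 1 n
/-- Removing the first step of a path of `2n` steps and appending a down-step. -/
def shiftApp (n : ℕ) (D : ℕ → Bool) : ℕ → Bool := fun j =>
  if 1 ≤ j ∧ j + 1 ≤ 2 * n then D (j + 1) else false


/-! ### Auxiliary lemmas -/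

section Aux
variable (n : ℕ) (σ : Equiv.Perm (Fin n))

lemma pval_range {j : ℕ} (h1 : 1 ≤ j) (h2 : j ≤ n) :
    1 ≤ pval n σ j ∧ pval n σ j ≤ n := by
  rw [pval, dif_pos ⟨h1, h2⟩]
  have := (σ ⟨j - 1, by omega⟩).isLt
  omega

lemma pval_zero_of {j : ℕ} (h : ¬(1 ≤ j ∧ j ≤ n)) : pval n σ j = 0 := by
  rw [pval, dif_neg h]

lemma ppos_range {k : ℕ} (h1 : 1 ≤ k) (h2 : k ≤ n) :
    1 ≤ ppos n σ k ∧ ppos n σ k ≤ n := by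
  rw [ppos, dif_pos ⟨h1, h2⟩]
  have := (σ.symm ⟨k - 1, by omega⟩).isLt
  omega

lemma pval_ppos {k : ℕ} (h1 : 1 ≤ k) (h2 : k ≤ n) :
    pval n σ (ppos n σ k) = k := by
  rw [ppos, dif_pos ⟨h1, h2⟩]
  have hb := (σ.symm ⟨k - 1, by omega⟩).isLt
  rw [pval, dif_pos ⟨by omega, by omega⟩]
  have he : (⟨(σ.symm ⟨k - 1, by omega⟩ : Fin n) + 1 - 1, by omega⟩ : Fin n)
      = σ.symm ⟨k - 1, by omega⟩ := by
    ext; simp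
  rw [he, Equiv.apply_symm_apply]
  simp only [Fin.val_mk]
  omega

lemma ppos_pval {j : ℕ} (h1 : 1 ≤ j) (h2 : j ≤ n) :
    ppos n σ (pval n σ j) = j := by
  rw [pval, dif_pos ⟨h1, h2⟩]
  have hb := (σ ⟨j - 1, by omega⟩).isLt
  rw [ppos, dif_pos ⟨by omega, by omega⟩]
  have he : (⟨(σ ⟨j - 1, by omega⟩ : Fin n) + 1 - 1, by omega⟩ : Fin n)
      = σ ⟨j - 1, by omega⟩ := by
    ext; simp
  rw [he, Equiv.symm_apply_apply]
  simp only [Fin.val_mk]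
  omega

lemma pval1_eq_pval {j : ℕ} (h : j ≤ n) : pval1 n σ j = pval n σ j := by
  rcases Nat.eq_zero_or_pos j with hj | hj
  · subst hj
    rw [pval1, if_pos rfl, pval_zero_of]
    omega
  · rw [pval1, if_neg (by omega), if_pos h]

end Aux


section Main

lemma min_getD (s : Finset ℕ) (h : s.Nonempty) (d : ℕ) :
    (s.min).getD d = s.min' h := by
  rw [← Finset.coe_min' h]; rfl

lemma max_getD (s : Finset ℕ) (h : s.Nonempty) (d : ℕ) :
    (s.max).getD d = s.max' h := by
  rw [← Finset.coe_max' h]; rfl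

lemma totk_top (n : ℕ) (σ : Equiv.Perm (Fin n)) : totk n σ n = 0 := by
  rw [totk, Finset.card_eq_zero, Finset.filter_eq_empty_iff]
  rintro ⟨i, q⟩ hp
  simp only [Finset.mem_product, Finset.mem_Icc] at hp
  intro h
  dsimp only at h
  have h1 := pval_range n σ hp.1.1 hp.1.2
  omega

/-- The set of positions `j` such that `(j, pos k)` is a 31-2 pattern with `2 = k`. -/
def Tset (n : ℕ) (σ : Equiv.Perm (Fin n)) (k : ℕ) : Finset ℕ :=
  (Finset.Icc 1 n).filter (fun j =>
    j + 1 < ppos n σ k ∧ pval n σ (j + 1) < k ∧ k < pval n σ j)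

lemma mem_Tset (n : ℕ) (σ : Equiv.Perm (Fin n)) (k j : ℕ) :
    j ∈ Tset n σ k ↔ (1 ≤ j ∧ j ≤ n) ∧
      j + 1 < ppos n σ k ∧ pval n σ (j + 1) < k ∧ k < pval n σ j := by
  rw [Tset, Finset.mem_filter, Finset.mem_Icc]

lemma totk_eq_card (n : ℕ) (σ : Equiv.Perm (Fin n)) {k : ℕ} (hk1 : 1 ≤ k) (hk2 : k ≤ n) :
    totk n σ k = (Tset n σ k).card := by
  rw [totk]
  have hset : ((Finset.Icc 1 n ×ˢ Finset.Icc 1 n).filter (fun p =>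
      p.1 + 1 < p.2 ∧ pval n σ (p.1 + 1) < pval n σ p.2 ∧ pval n σ p.2 < pval n σ p.1 ∧
        pval n σ p.2 = k)) = Tset n σ k ×ˢ {ppos n σ k} := by
    ext ⟨j, q⟩
    simp only [Finset.mem_filter, Finset.mem_product, Finset.mem_Icc, Finset.mem_singleton,
      mem_Tset]
    constructor
    · rintro ⟨⟨hj, hq⟩, hlt, h1, h2, h3⟩
      have hq' : q = ppos n σ k := by rw [← h3, ppos_pval n σ hq.1 hq.2]
      subst hq'
      rw [h3] at h1 h2
      exact ⟨⟨hj, hlt, h1, h2⟩, rfl⟩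
    · rintro ⟨⟨hj, h1, h2, h3⟩, hq⟩
      subst hq
      have hpr := ppos_range n σ hk1 hk2
      have hpv := pval_ppos n σ hk1 hk2
      rw [hpv]
      exact ⟨⟨hj, hpr⟩, h1, h2, h3, rfl⟩
  rw [hset, Finset.card_product, Finset.card_singleton, mul_one]

/-- Positions before `p` straddling the interval of values. -/
def T0set (n : ℕ) (σ : Equiv.Perm (Fin n)) (p A B : ℕ) : Finset ℕ :=
  (Finset.Icc 1 n).filter (fun j =>
    j + 1 < p ∧ pval n σ (j + 1) < A ∧ B < pval n σ j)

/-- Positions at least `p - 1` straddling `k` before `pos k`. -/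
def Eset (n : ℕ) (σ : Equiv.Perm (Fin n)) (p k : ℕ) : Finset ℕ :=
  (Finset.Icc 1 n).filter (fun j =>
    p ≤ j + 1 ∧ j + 1 < ppos n σ k ∧ pval n σ (j + 1) < k ∧ k < pval n σ j)

lemma mem_T0set (n : ℕ) (σ : Equiv.Perm (Fin n)) (p A B j : ℕ) :
    j ∈ T0set n σ p A B ↔ (1 ≤ j ∧ j ≤ n) ∧
      j + 1 < p ∧ pval n σ (j + 1) < A ∧ B < pval n σ j := by
  rw [T0set, Finset.mem_filter, Finset.mem_Icc]

lemma mem_Eset (n : ℕ) (σ : Equiv.Perm (Fin n)) (p k j : ℕ) :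
    j ∈ Eset n σ p k ↔ (1 ≤ j ∧ j ≤ n) ∧
      p ≤ j + 1 ∧ j + 1 < ppos n σ k ∧ pval n σ (j + 1) < k ∧ k < pval n σ j := by
  rw [Eset, Finset.mem_filter, Finset.mem_Icc]

lemma chooseD_eq_chooseP (n : ℕ) (σ : Equiv.Perm (Fin n)) (D : ℕ → Bool) (w : ℕ → ℕ)
    (hw : ∀ k, 1 ≤ k → k ≤ n → w k = totk n σ k)
    (hD : ∀ k, 1 ≤ k → k ≤ n → (D (2 * k) = false ↔ pval n σ (ppos n σ k - 1) < k))
    (a b : ℕ) : chooseD n D w a b = chooseP n σ a b := by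
  simp only [chooseD, chooseP]
  by_cases hAB : max a 1 ≤ min b n
  case neg =>
    rw [Finset.Icc_eq_empty hAB]
    simp only [Finset.image_empty, Finset.filter_empty, Finset.min_empty, Finset.max_empty]
    have h0 : (⊤ : WithTop ℕ).getD 0 = 0 := rfl
    have hb : (⊥ : WithBot ℕ).getD 0 = 0 := rfl
    exact (pval_zero_of n σ (j := 0) (by omega)).symm
  case pos =>
  set I := Finset.Icc (max a 1) (min b n) with hIdef
  have hne : I.Nonempty := Finset.nonempty_Icc.mpr hAB
  have hmemI : ∀ k ∈ I, 1 ≤ k ∧ k ≤ n := by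
    intro k hk; rw [hIdef, Finset.mem_Icc] at hk; omega
  have hmemAB : ∀ k ∈ I, max a 1 ≤ k ∧ k ≤ min b n := by
    intro k hk; rw [hIdef, Finset.mem_Icc] at hk; exact hk
  -- the minimal position p and the first value K
  have hJne : (I.image (ppos n σ)).Nonempty := hne.image _
  set p := (I.image (ppos n σ)).min' hJne with hpdef
  obtain ⟨k0, hk0I, hk0p⟩ := Finset.mem_image.mp (Finset.min'_mem _ hJne)
  have hple : ∀ k ∈ I, p ≤ ppos n σ k := fun k hk =>
    Finset.min'_le _ _ (Finset.mem_image_of_mem _ hk)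
  set K := pval n σ p with hKdef
  have hKk0 : K = k0 := by
    rw [hKdef, hpdef, ← hk0p, pval_ppos n σ (hmemI k0 hk0I).1 (hmemI k0 hk0I).2]
  have hKI : K ∈ I := hKk0 ▸ hk0I
  have hK1 : 1 ≤ K := (hmemI K hKI).1
  have hKn : K ≤ n := (hmemI K hKI).2
  have hposK : ppos n σ K = p := by rw [hKk0, hk0p, hpdef]
  have hp1 : 1 ≤ p := by
    rw [hpdef, ← hk0p]; exact (ppos_range n σ (hmemI k0 hk0I).1 (hmemI k0 hk0I).2).1
  have hpn : p ≤ n := by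
    rw [hpdef, ← hk0p]; exact (ppos_range n σ (hmemI k0 hk0I).1 (hmemI k0 hk0I).2).2
  -- rewrite the RHS
  rw [min_getD _ hJne, ← hpdef, ← hKdef]
  -- values before position p are outside the interval
  have hbefore : ∀ m, 1 ≤ m → m < p → pval n σ m < max a 1 ∨ min b n < pval n σ m := by
    intro m hm1 hmp
    by_contra hcon
    push_neg at hcon
    have hmn : m ≤ n := by omega
    have hin : pval n σ m ∈ I := by
      rw [hIdef, Finset.mem_Icc]; omega
    have := hple _ hin
    rw [ppos_pval n σ hm1 hmn] at this
    omega
  -- weight decomposition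
  have htot : ∀ k ∈ I, totk n σ k =
      (T0set n σ p (max a 1) (min b n)).card + (Eset n σ p k).card := by
    intro k hkI
    obtain ⟨hk1, hkn⟩ := hmemI k hkI
    obtain ⟨hkA, hkB⟩ := hmemAB k hkI
    rw [totk_eq_card n σ hk1 hkn]
    have hun : Tset n σ k = T0set n σ p (max a 1) (min b n) ∪ Eset n σ p k := by
      ext j
      rw [mem_Tset, Finset.mem_union, mem_T0set, mem_Eset]
      constructor
      · rintro ⟨hj, hjp, hv1, hv2⟩
        by_cases hc : j + 1 < p
        · left
          refine ⟨hj, hc, ?_, ?_⟩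
          · rcases hbefore (j + 1) (by omega) hc with h | h
            · exact h
            · omega
          · rcases hbefore j (by omega) (by omega) with h | h
            · omega
            · exact h
        · right; exact ⟨hj, by omega, hjp, hv1, hv2⟩
      · rintro (⟨hj, hjp, hv1, hv2⟩ | ⟨hj, _, hjp, hv1, hv2⟩)
        · have hpk := hple k hkI
          exact ⟨hj, by omega, by omega, by omega⟩
        · exact ⟨hj, hjp, hv1, hv2⟩
    rw [hun, Finset.card_union_of_disjoint]
    rw [Finset.disjoint_left]
    intro j hj hj2
    rw [mem_T0set] at hj
    rw [mem_Eset] at hj2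
    omega
  have hEK : Eset n σ p K = ∅ := by
    rw [Finset.eq_empty_iff_forall_notMem]
    intro j hj
    rw [mem_Eset, hposK] at hj
    omega
  -- the minimum weight
  have hwI : ∀ k ∈ I, w k =
      (T0set n σ p (max a 1) (min b n)).card + (Eset n σ p k).card := by
    intro k hk
    rw [hw k (hmemI k hk).1 (hmemI k hk).2, htot k hk]
  have hwK : w K = (T0set n σ p (max a 1) (min b n)).card := by
    rw [hwI K hKI, hEK, Finset.card_empty, add_zero]
  have hWne : (I.image w).Nonempty := hne.image _
  have hminw : ((I.image w).min).getD 0 = (T0set n σ p (max a 1) (min b n)).card := by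
    rw [min_getD _ hWne]
    apply le_antisymm
    · calc (I.image w).min' hWne ≤ w K := Finset.min'_le _ _ (Finset.mem_image_of_mem w hKI)
      _ = _ := hwK
    · obtain ⟨k1, hk1I, hk1⟩ := Finset.mem_image.mp (Finset.min'_mem _ hWne)
      rw [← hk1, hwI k1 hk1I]
      exact Nat.le_add_right _ _
  -- the set of minimal-weight values
  have hMiff : ∀ k, k ∈ I.filter (fun i => w i = ((I.image w).min).getD 0) ↔
      k ∈ I ∧ Eset n σ p k = ∅ := by
    intro k
    rw [Finset.mem_filter, hminw]
    constructor
    · rintro ⟨hkI, hwk⟩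
      refine ⟨hkI, ?_⟩
      rw [← Finset.card_eq_zero]
      have := hwI k hkI
      omega
    · rintro ⟨hkI, hE⟩
      refine ⟨hkI, ?_⟩
      rw [hwI k hkI, hE, Finset.card_empty, add_zero]
  have hKM : K ∈ I.filter (fun i => w i = ((I.image w).min).getD 0) :=
    (hMiff K).mpr ⟨hKI, hEK⟩
  -- values of the interval smaller than K have an up-step
  have hup : ∀ k ∈ I, k < K → Eset n σ p k = ∅ → ¬ (pval n σ (ppos n σ k - 1) < k) := by
    intro k hkI hkK hE hlt
    obtain ⟨hk1, hkn⟩ := hmemI k hkI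
    have hq1 : 1 ≤ ppos n σ k := (ppos_range n σ hk1 hkn).1
    have hqn : ppos n σ k ≤ n := (ppos_range n σ hk1 hkn).2
    have hpq : p < ppos n σ k := by
      have hle := hple k hkI
      rcases eq_or_lt_of_le hle with h | h
      · exfalso
        have : K = k := by rw [hKdef, h, pval_ppos n σ hk1 hkn]
        omega
      · exact h
    set S := (Finset.Icc p (ppos n σ k - 1)).filter (fun j => k < pval n σ j) with hSdef
    have hpS : p ∈ S := by
      rw [hSdef, Finset.mem_filter, Finset.mem_Icc]
      refine ⟨⟨le_refl _, by omega⟩, ?_⟩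
      rw [← hKdef]; omega
    have hSne : S.Nonempty := ⟨p, hpS⟩
    obtain ⟨j0, hj0mem, hj0max⟩ : ∃ j0 ∈ S, ∀ x ∈ S, x ≤ j0 :=
      ⟨S.max' hSne, S.max'_mem hSne, fun x hx => S.le_max' x hx⟩
    rw [hSdef, Finset.mem_filter, Finset.mem_Icc] at hj0mem
    obtain ⟨⟨hj0p, hj0q⟩, hj0v⟩ := hj0mem
    have hj0ne : j0 ≠ ppos n σ k - 1 := by
      intro h; rw [h] at hj0v; omega
    have hj1q : j0 + 1 ≤ ppos n σ k - 1 := by omega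
    have hj1v : pval n σ (j0 + 1) ≤ k := by
      by_contra hcon
      push_neg at hcon
      have hmem : j0 + 1 ∈ S := by
        rw [hSdef, Finset.mem_filter, Finset.mem_Icc]
        exact ⟨⟨by omega, hj1q⟩, hcon⟩
      have := hj0max _ hmem
      omega
    have hj1ne : pval n σ (j0 + 1) ≠ k := by
      intro h
      have : ppos n σ k = j0 + 1 := by
        rw [← h, ppos_pval n σ (by omega) (by omega)]
      omega
    have : j0 ∈ Eset n σ p k := by
      rw [mem_Eset]
      exact ⟨⟨by omega, by omega⟩, by omega, by omega, by omega, hj0v⟩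
    rw [hE] at this
    exact absurd this (Finset.notMem_empty _)
  -- case analysis on the step 2K
  by_cases hdn : pval n σ (p - 1) < K
  · -- K carries a down-step; it is the minimum of Md
    have hKMd : K ∈ (I.filter (fun i => w i = ((I.image w).min).getD 0)).filter
        (fun i => D (2 * i) = false) := by
      rw [Finset.mem_filter]
      exact ⟨hKM, (hD K hK1 hKn).mpr (by rw [hposK]; exact hdn)⟩
    have hMdne : ((I.filter (fun i => w i = ((I.image w).min).getD 0)).filter
        (fun i => D (2 * i) = false)).Nonempty := ⟨K, hKMd⟩
    rw [min_getD _ hMdne]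
    apply le_antisymm (Finset.min'_le _ _ hKMd)
    apply Finset.le_min'
    intro y hy
    rw [Finset.mem_filter] at hy
    obtain ⟨hyM, hyD⟩ := hy
    obtain ⟨hyI, hyE⟩ := (hMiff y).mp hyM
    by_contra hcon
    push_neg at hcon
    exact hup y hyI hcon hyE ((hD y (hmemI y hyI).1 (hmemI y hyI).2).mp hyD)
  · -- K carries an up-step: Md is empty and K is the maximum of M
    have hp2 : 2 ≤ p := by
      by_contra hcon
      have hp1' : p = 1 := by omega
      rw [hp1', pval_zero_of n σ (by omega)] at hdn
      omega
    have hpv : min b n < pval n σ (p - 1) := by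
      rcases hbefore (p - 1) (by omega) (by omega) with h | h
      · exfalso
        have := (hmemAB K hKI).1
        omega
      · exact h
    have hMle : ∀ m ∈ I.filter (fun i => w i = ((I.image w).min).getD 0), m ≤ K := by
      intro m hm
      obtain ⟨hmI, hmE⟩ := (hMiff m).mp hm
      by_contra hcon
      push_neg at hcon
      have hppm : p < ppos n σ m := by
        have hle := hple m hmI
        rcases eq_or_lt_of_le hle with h | h
        · exfalso
          have : K = m := by
            rw [hKdef, h, pval_ppos n σ (hmemI m hmI).1 (hmemI m hmI).2]
          omega
        · exact h
      have hmem : p - 1 ∈ Eset n σ p m := by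
        rw [mem_Eset]
        have hp1e : p - 1 + 1 = p := by omega
        rw [hp1e]
        refine ⟨⟨by omega, by omega⟩, le_refl _, hppm, ?_, ?_⟩
        · rw [← hKdef]; omega
        · have := (hmemAB m hmI).2
          omega
      rw [hmE] at hmem
      exact absurd hmem (Finset.notMem_empty _)
    have hMdemp : (I.filter (fun i => w i = ((I.image w).min).getD 0)).filter
        (fun i => D (2 * i) = false) = ∅ := by
      rw [Finset.filter_eq_empty_iff]
      intro m hm hDm
      obtain ⟨hmI, hmE⟩ := (hMiff m).mp hm
      have hlt := (hD m (hmemI m hmI).1 (hmemI m hmI).2).mp hDm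
      have hmK := hMle m hm
      rcases eq_or_lt_of_le hmK with h | h
      · rw [h, hposK] at hlt
        exact hdn hlt
      · exact hup m hmI h hmE hlt
    rw [hMdemp, Finset.min_empty]
    have hMne : (I.filter (fun i => w i = ((I.image w).min).getD 0)).Nonempty := ⟨K, hKM⟩
    show (Finset.max _).getD 0 = K
    rw [max_getD _ hMne]
    exact le_antisymm (Finset.max'_le _ _ _ hMle) (Finset.le_max' _ _ hKM)

end Main


section Inst
variable (n : ℕ) (σ : Equiv.Perm (Fin n))

lemma fv_hw : ∀ k, 1 ≤ k → k ≤ n → fvWeight n σ k = totk n σ k := by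
  intro k h1 h2
  rw [fvWeight, if_pos ⟨h1, h2⟩]

lemma fv_hD : ∀ k, 1 ≤ k → k ≤ n →
    (fvPath n σ (2 * k) = false ↔ pval n σ (ppos n σ k - 1) < k) := by
  intro k h1 h2
  have hq := ppos_range n σ h1 h2
  simp only [fvPath]
  rw [if_pos (show 1 ≤ 2 * k ∧ 2 * k ≤ 2 * n by omega),
    if_neg (show ¬ (2 * k) % 2 = 1 by omega)]
  have h2k : 2 * k / 2 = k := by omega
  rw [h2k, pval1_eq_pval n σ (show ppos n σ k - 1 ≤ n by omega),
    pval1_eq_pval n σ (show ppos n σ k ≤ n from hq.2), pval_ppos n σ h1 h2]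
  by_cases hc : pval n σ (ppos n σ k - 1) < k
  · simp [hc]
  · simp [hc]

lemma fv0_hw : ∀ k, 1 ≤ k → k ≤ n → fv0Weight n σ k = totk n σ k := by
  intro k h1 h2
  by_cases hk : k + 1 ≤ n
  · rw [fv0Weight, if_pos ⟨h1, hk⟩]
  · have hkn : k = n := by omega
    rw [fv0Weight, if_neg (by omega), hkn, totk_top]

lemma fv0_hD : ∀ k, 1 ≤ k → k ≤ n →
    (shiftApp n (fv0Path n σ) (2 * k) = false ↔ pval n σ (ppos n σ k - 1) < k) := by
  intro k h1 h2
  have hq := ppos_range n σ h1 h2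
  by_cases hk : k < n
  · simp only [shiftApp]
    rw [if_pos (show 1 ≤ 2 * k ∧ 2 * k + 1 ≤ 2 * n by omega)]
    simp only [fv0Path]
    rw [if_neg (show ¬(2 * k + 1 = 0 ∨ 2 * n < 2 * k + 1) by omega),
      if_neg (show ¬(2 * k + 1 = 1) by omega),
      if_neg (show ¬(2 * k + 1 = 2 * n) by omega),
      if_neg (show ¬(2 * k + 1 - 1) % 2 = 1 by omega)]
    have h2k : (2 * k + 1 - 1) / 2 = k := by omega
    rw [h2k, pval_ppos n σ h1 h2]
    by_cases hc : pval n σ (ppos n σ k - 1) < k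
    · simp [hc]
    · simp [hc]
  · have hkn : k = n := by omega
    constructor
    · intro _
      by_cases h0 : ppos n σ k - 1 = 0
      · rw [h0, pval_zero_of n σ (by omega)]
        omega
      · have hr := pval_range n σ (show 1 ≤ ppos n σ k - 1 by omega)
          (show ppos n σ k - 1 ≤ n by omega)
        rcases eq_or_lt_of_le hr.2 with h | h
        · exfalso
          have hpp := ppos_pval n σ (show 1 ≤ ppos n σ k - 1 by omega)
            (show ppos n σ k - 1 ≤ n by omega)
          rw [h] at hpp
          have hpp' : ppos n σ k = ppos n σ k - 1 := by nth_rewrite 1 [hkn]; exact hpp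
          omega
        · omega
    · intro _
      rw [shiftApp, if_neg (by omega)]

end Inst

/-- Lemma: (i) the root-selection algorithm applied to `ψ_FV(σ)` yields the binary
search tree of `σ`; (ii) the root-selection algorithm applied to the weighted path
obtained from `ψ_FV⁰(σ)` by removing the first step and appending a down-step at the
end also yields the binary search tree of `σ`. -/
theorem bst_from_weighted_paths (n : ℕ) (σ : Equiv.Perm (Fin n)) :
    bstOfPath n (fvPath n σ) (fvWeight n σ) = bstOfPerm n σ ∧
    bstOfPath n (shiftApp n (fv0Path n σ)) (fv0Weight n σ) = bstOfPerm n σ := by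
  constructor
  · have h : chooseD n (fvPath n σ) (fvWeight n σ) = chooseP n σ :=
      funext fun a => funext fun b =>
        chooseD_eq_chooseP n σ _ _ (fv_hw n σ) (fv_hD n σ) a b
    rw [bstOfPath, bstOfPerm, h]
  · have h : chooseD n (shiftApp n (fv0Path n σ)) (fv0Weight n σ) = chooseP n σ :=
      funext fun a => funext fun b =>
        chooseD_eq_chooseP n σ _ _ (fv0_hw n σ) (fv0_hD n σ) a b
    rw [bstOfPath, bstOfPerm, h]
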